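/- The class of balanced representations of the generalized subspace quiver Γ is closed under extensions: if 0 → L → M → N → 0 is a short exact sequence of representations of Γ with L and N balanced, then M is balanced. -/
import Mathlib


open Finset

/-- A representation of the generalized subspace quiver is balanced if for every cluster `i`
the combined map `Ψ(X,i)` is bijective. -/
def IsBalancedRep (K : Type*) [Field K] {m : ℕ} {r : Fin m → ℕ} (w : ∀ i, Fin (r i) → ℕ)
    {X0 : Type*} [AddCommGroup X0] [Module K X0]
    {X : ∀ i, Fin (r i) → Type*} [∀ i j, AddCommGroup (X i j)] [∀ i j, Module K (X i j)]
    (f : ∀ i j, Fin (w i j) → (X i j →ₗ[K] X0)) : Prop :=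
  ∀ i, Function.Bijective
    (fun g : (j : Fin (r i)) → Fin (w i j) → X i j => ∑ j, ∑ k, f i j k (g j k))

/-- Balanced representations are closed under extensions: if `0 → L → M → N → 0` is a short
exact sequence of representations of the generalized subspace quiver with `L` and `N`
balanced, then `M` is balanced. -/
theorem balanced_closed_under_extensions (K : Type*) [Field K]
    (m : ℕ) (r : Fin m → ℕ) (w : ∀ i, Fin (r i) → ℕ)
    (L0 M0 N0 : Type*) [AddCommGroup L0] [Module K L0] [AddCommGroup M0] [Module K M0]
    [AddCommGroup N0] [Module K N0]
    (L M N : ∀ i, Fin (r i) → Type*)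
    [∀ i j, AddCommGroup (L i j)] [∀ i j, Module K (L i j)]
    [∀ i j, AddCommGroup (M i j)] [∀ i j, Module K (M i j)]
    [∀ i j, AddCommGroup (N i j)] [∀ i j, Module K (N i j)]
    (fL : ∀ i j, Fin (w i j) → (L i j →ₗ[K] L0))
    (fM : ∀ i j, Fin (w i j) → (M i j →ₗ[K] M0))
    (fN : ∀ i j, Fin (w i j) → (N i j →ₗ[K] N0))
    -- the morphism `φ : L → M`
    (φ0 : L0 →ₗ[K] M0) (φ : ∀ i j, L i j →ₗ[K] M i j)
    (hφ : ∀ i j k x, fM i j k (φ i j x) = φ0 (fL i j k x))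
    -- the morphism `ψ : M → N`
    (ψ0 : M0 →ₗ[K] N0) (ψ : ∀ i j, M i j →ₗ[K] N i j)
    (hψ : ∀ i j k x, fN i j k (ψ i j x) = ψ0 (fM i j k x))
    -- exactness at every vertex
    (hexact0 : Function.Injective φ0 ∧ Function.Surjective ψ0 ∧
      LinearMap.range φ0 = LinearMap.ker ψ0)
    (hexact : ∀ i j, Function.Injective (φ i j) ∧ Function.Surjective (ψ i j) ∧
      LinearMap.range (φ i j) = LinearMap.ker (ψ i j))
    (hL : IsBalancedRep K w fL) (hN : IsBalancedRep K w fN) :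
    IsBalancedRep K w fM := by

  intro i
  have hψΨ : ∀ g : (j : Fin (r i)) → Fin (w i j) → M i j,
      ψ0 (∑ j, ∑ k, fM i j k (g j k)) = ∑ j, ∑ k, fN i j k (ψ i j (g j k)) := by
    intro g; simp [map_sum, hψ]
  have hφΨ : ∀ g : (j : Fin (r i)) → Fin (w i j) → L i j,
      φ0 (∑ j, ∑ k, fL i j k (g j k)) = ∑ j, ∑ k, fM i j k (φ i j (g j k)) := by
    intro g; simp [map_sum, hφ]
  constructor
  · -- injectivity
    intro a b hab
    simp only at hab
    set d : (j : Fin (r i)) → Fin (w i j) → M i j := fun j k => a j k - b j k with hd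
    have hΨd : ∑ j, ∑ k, fM i j k (d j k) = 0 := by
      simp only [hd, map_sub, Finset.sum_sub_distrib, hab, sub_self]
    have h1 : ∑ j, ∑ k, fN i j k (ψ i j (d j k)) = 0 := by
      rw [← hψΨ, hΨd, map_zero]
    have h2 : (fun j k => ψ i j (d j k)) = (fun j k => (0 : N i j)) := by
      apply (hN i).1
      simpa using h1
    have h3 : ∀ j k, ∃ x, φ i j x = d j k := by
      intro j k
      have : d j k ∈ LinearMap.ker (ψ i j) := by
        simpa using congrFun (congrFun h2 j) k
      rw [← (hexact i j).2.2] at this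
      exact this
    choose e he using h3
    have h4 : φ0 (∑ j, ∑ k, fL i j k (e j k)) = 0 := by
      rw [hφΨ]
      simp only [he, hΨd]
    have h5 : ∑ j, ∑ k, fL i j k (e j k) = 0 := by
      apply hexact0.1; simpa using h4
    have h6 : e = fun j k => (0 : L i j) := by
      apply (hL i).1; simpa using h5
    funext j k
    have := he j k
    rw [congrFun (congrFun h6 j) k, map_zero] at this
    have : a j k - b j k = 0 := this.symm
    exact sub_eq_zero.mp this
  · -- surjectivity
    intro y
    obtain ⟨gN, hgN⟩ := (hN i).2 (ψ0 y)
    simp only at hgN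
    have hlift : ∀ j k, ∃ x, ψ i j x = gN j k := fun j k => (hexact i j).2.1 (gN j k)
    choose gM hgM using hlift
    have h1 : ψ0 (y - ∑ j, ∑ k, fM i j k (gM j k)) = 0 := by
      rw [map_sub, hψΨ]
      simp only [hgM, hgN, sub_self]
    have h2 : ∃ x, φ0 x = y - ∑ j, ∑ k, fM i j k (gM j k) := by
      have : y - ∑ j, ∑ k, fM i j k (gM j k) ∈ LinearMap.ker ψ0 := h1
      rw [← hexact0.2.2] at this
      exact this
    obtain ⟨x, hx⟩ := h2
    obtain ⟨gL, hgL⟩ := (hL i).2 x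
    simp only at hgL
    refine ⟨fun j k => gM j k + φ i j (gL j k), ?_⟩
    simp only [map_add, Finset.sum_add_distrib]
    rw [← hφΨ, hgL, hx]
    abel
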